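/- Let A, B be real n×n positive definite matrices (i.e. u^⊤Au > 0 and u^⊤Bu > 0 for every nonzero u ∈ ℝ^n; symmetry is not assumed). Let (x̄, ȳ, w̄) be a global optimal solution with zero optimal value of the problem min{ ‖y‖² + x^⊤w − (x^⊤y)²/‖x‖² : (x, y, w) ∈ C₃ }, where C₃ = { (x, y, w) ∈ ℝ₊^n × ℝ₊^n × ℝ₊^n : w = Bx − Ay, e^⊤x = 1 }. Then ȳ ≠ 0 and the pair (x̄, ‖x̄‖/‖ȳ‖) is a solution of the asymmetric eigenvalue complementarity problem AEiCP(A,B). -/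

import Mathlib

open Matrix

/-- A pair `(x, lam)` solves the (asymmetric) eigenvalue complementarity problem
EiCP(A,B): `x ≥ 0`, `x ≠ 0`, `w := lam·Bx − Ax ≥ 0` and `xᵀw = 0`. -/
def IsEiCPSol {n : ℕ} (A B : Matrix (Fin n) (Fin n) ℝ) (x : Fin n → ℝ) (lam : ℝ) :
    Prop :=
  (∀ i, 0 ≤ x i) ∧ x ≠ 0 ∧ (∀ i, 0 ≤ (lam • (B *ᵥ x) - A *ᵥ x) i) ∧
    x ⬝ᵥ (lam • (B *ᵥ x) - A *ᵥ x) = 0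

/-- (Theorem 3.1) A zero-value global solution of (NLP3)
yields a solution `(x̄, ‖x̄‖/‖ȳ‖)` of AEiCP(A,B). Here `‖u‖² = u ⬝ᵥ u`. -/
theorem stmt11 {n : ℕ} (A B : Matrix (Fin n) (Fin n) ℝ)
    (hA : ∀ u : Fin n → ℝ, u ≠ 0 → 0 < u ⬝ᵥ (A *ᵥ u))
    (hB : ∀ u : Fin n → ℝ, u ≠ 0 → 0 < u ⬝ᵥ (B *ᵥ u))
    (xb yb wb : Fin n → ℝ)
    (hxb : ∀ i, 0 ≤ xb i) (hyb : ∀ i, 0 ≤ yb i) (hwb : ∀ i, 0 ≤ wb i)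
    (hwdef : wb = B *ᵥ xb - A *ᵥ yb) (hsum : ∑ i, xb i = 1)
    (hzero : yb ⬝ᵥ yb + xb ⬝ᵥ wb - (xb ⬝ᵥ yb) ^ 2 / (xb ⬝ᵥ xb) = 0)
    (hopt : ∀ x y w : Fin n → ℝ, (∀ i, 0 ≤ x i) → (∀ i, 0 ≤ y i) →
      (∀ i, 0 ≤ w i) → w = B *ᵥ x - A *ᵥ y → ∑ i, x i = 1 →
      0 ≤ y ⬝ᵥ y + x ⬝ᵥ w - (x ⬝ᵥ y) ^ 2 / (x ⬝ᵥ x)) :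
    yb ≠ 0 ∧
      IsEiCPSol A B xb (Real.sqrt (xb ⬝ᵥ xb) / Real.sqrt (yb ⬝ᵥ yb)) := by

  classical
  -- basic notation
  set s : ℝ := xb ⬝ᵥ xb with hsdef
  set c : ℝ := xb ⬝ᵥ yb with hcdef
  have hx0 : xb ≠ 0 := by
    intro h
    rw [h] at hsum
    simp at hsum
  have hs : 0 < s := by
    obtain ⟨i, hi⟩ := Function.ne_iff.mp hx0
    have h1 : 0 < xb i * xb i := mul_self_pos.mpr hi
    have h2 : xb i * xb i ≤ ∑ j, xb j * xb j :=
      Finset.single_le_sum (fun j _ => mul_self_nonneg (xb j)) (Finset.mem_univ i)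
    rw [hsdef, dotProduct]
    linarith
  have hxw : 0 ≤ xb ⬝ᵥ wb := by
    rw [dotProduct]
    exact Finset.sum_nonneg fun i _ => mul_nonneg (hxb i) (hwb i)
  have hy0 : yb ≠ 0 := by
    intro h
    subst h
    have hw' : wb = B *ᵥ xb := by
      rw [hwdef]; simp [Matrix.mulVec_zero]
    have : xb ⬝ᵥ wb = 0 := by
      have := hzero
      simp [hcdef] at this
      linarith [this]
    rw [hw'] at this
    exact absurd this (ne_of_gt (hB xb hx0))
  -- Cauchy-Schwarz via the vector u = c • xb - s • yb
  set u : Fin n → ℝ := c • xb - s • yb with hudef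
  have hu : u ⬝ᵥ u = s * (s * (yb ⬝ᵥ yb) - c ^ 2) := by
    simp only [hudef, dotProduct_sub, sub_dotProduct, dotProduct_smul, smul_dotProduct,
      smul_eq_mul, dotProduct_comm yb xb, ← hsdef, ← hcdef]
    ring
  have huNN : 0 ≤ u ⬝ᵥ u := by
    rw [dotProduct]
    exact Finset.sum_nonneg fun i _ => mul_self_nonneg (u i)
  have hCS : c ^ 2 ≤ s * (yb ⬝ᵥ yb) := by nlinarith [hu, huNN]
  have hdiv : c ^ 2 / s ≤ yb ⬝ᵥ yb := (div_le_iff₀ hs).mpr (by nlinarith)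
  -- from the zero objective value
  have hxw0 : xb ⬝ᵥ wb = 0 := by linarith
  have hyyeq : yb ⬝ᵥ yb = c ^ 2 / s := by linarith
  have hsyy : s * (yb ⬝ᵥ yb) = c ^ 2 := by
    rw [hyyeq]; field_simp
  -- u = 0, hence yb is proportional to xb
  have huu0 : u ⬝ᵥ u = 0 := by rw [hu, hsyy]; ring
  have hu0 : ∀ i, u i = 0 := by
    intro i
    have hsum0 : ∑ j, u j * u j = 0 := by rw [← dotProduct]; exact huu0
    have := (Finset.sum_eq_zero_iff_of_nonneg
      (fun j _ => mul_self_nonneg (u j))).mp hsum0 i (Finset.mem_univ i)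
    exact mul_self_eq_zero.mp this
  have hc0 : 0 ≤ c := by
    rw [hcdef, dotProduct]
    exact Finset.sum_nonneg fun i _ => mul_nonneg (hxb i) (hyb i)
  have hcpos : 0 < c := by
    rcases lt_or_eq_of_le hc0 with h | h
    · exact h
    · exfalso
      have hyy0 : yb ⬝ᵥ yb = 0 := by rw [hyyeq, ← h]; simp
      have : yb = 0 := by
        funext i
        have hsum0 : ∑ j, yb j * yb j = 0 := by rw [← dotProduct]; exact hyy0
        have := (Finset.sum_eq_zero_iff_of_nonneg
          (fun j _ => mul_self_nonneg (yb j))).mp hsum0 i (Finset.mem_univ i)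
        exact mul_self_eq_zero.mp this
      exact hy0 this
  have hyprop : ∀ i, yb i = (c / s) * xb i := by
    intro i
    have := hu0 i
    simp only [hudef, Pi.sub_apply, Pi.smul_apply, smul_eq_mul] at this
    field_simp
    linarith
  -- the eigenvalue
  have hyy' : yb ⬝ᵥ yb = (c / s) ^ 2 * s := by
    rw [hyyeq]; field_simp
  have hlam : Real.sqrt s / Real.sqrt (yb ⬝ᵥ yb) = s / c := by
    rw [hyy']
    have h1 : Real.sqrt ((c / s) ^ 2 * s) = (c / s) * Real.sqrt s := by
      rw [Real.sqrt_mul (sq_nonneg _), Real.sqrt_sq (le_of_lt (div_pos hcpos hs))]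
    rw [h1]
    have hss : Real.sqrt s ≠ 0 := ne_of_gt (Real.sqrt_pos.mpr hs)
    field_simp
  -- the key identity: lam • Bx - Ax = (s/c) • wb
  have heq : (s / c) • (B *ᵥ xb) - A *ᵥ xb = (s / c) • wb := by
    have hyb' : yb = (c / s) • xb := by
      funext i
      rw [hyprop i]
      simp [Pi.smul_apply, smul_eq_mul]
    funext i
    rw [hwdef, hyb', Matrix.mulVec_smul]
    simp only [Pi.sub_apply, Pi.smul_apply, smul_eq_mul]
    field_simp
  refine ⟨hy0, hxb, hx0, ?_, ?_⟩
  · intro i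
    rw [hlam, heq]
    simp only [Pi.smul_apply, smul_eq_mul]
    exact mul_nonneg (le_of_lt (div_pos hs hcpos)) (hwb i)
  · rw [hlam, heq, dotProduct_smul, smul_eq_mul, hxw0, mul_zero]
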